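/- Let A be a complex n×n matrix and k a positive integer with k < n/3 + 1. For t ∈ ℝ write A(t) = e^{it}A + e^{-it}A*, which is Hermitian, and let λ_k(A(t)) denote its k-th largest eigenvalue. Then for any t₁, t₂, t₃ ∈ [0, 2π) there exists a unit vector v ∈ ℂ^n such that, with μ = v*Av, one has e^{it_j}μ + e^{-it_j}\overline{μ} ≤ λ_k(A(t_j)) for each j = 1, 2, 3. -/

import Mathlib

open Matrix
open scoped ComplexOrder

/-- The `k`-th largest value (1-indexed, counted with multiplicity) of a finite
family `f : Fin n → ℝ`, defined via sorting; junk value `0` if `k` is out of range. -/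
noncomputable def kthLargest {n : ℕ} (f : Fin n → ℝ) (k : ℕ) : ℝ :=
  if h : 0 < k ∧ k ≤ n then (f ∘ Tuple.sort f) ⟨n - k, by omega⟩ else 0

lemma card_gt_kthLargest {n k : ℕ} (hk : 0 < k) (hkn : k ≤ n) (f : Fin n → ℝ) :
    (Finset.univ.filter fun i => kthLargest f k < f i).card ≤ k - 1 := by
  classical
  have hkth : kthLargest f k = (f ∘ Tuple.sort f) ⟨n - k, by omega⟩ := by
    rw [kthLargest, dif_pos ⟨hk, hkn⟩]
  set σ := Tuple.sort f with hσ
  have hmono : Monotone (f ∘ σ) := Tuple.monotone_sort f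
  have hcard : ((Finset.univ.filter fun i : Fin n => kthLargest f k < f i).image σ.symm).card
      = (Finset.univ.filter fun i : Fin n => kthLargest f k < f i).card :=
    Finset.card_image_of_injective _ σ.symm.injective
  have himg : (Finset.univ.filter fun i : Fin n => kthLargest f k < f i).image σ.symm ⊆
      Finset.Ioi (⟨n - k, by omega⟩ : Fin n) := by
    intro j hj
    simp only [Finset.mem_image, Finset.mem_filter] at hj
    obtain ⟨i, ⟨-, hi⟩, rfl⟩ := hj
    rw [Finset.mem_Ioi]
    by_contra hle
    push_neg at hle
    have : f i = (f ∘ σ) (σ.symm i) := by simp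
    rw [this, hkth] at hi
    exact absurd (hmono hle) (not_le.mpr hi)
  have := Finset.card_le_card himg
  rw [hcard, Fin.card_Ioi] at this
  simp only [Fin.val_mk] at this
  omega

lemma quad_spectral {n : ℕ} {B : Matrix (Fin n) (Fin n) ℂ} (hB : B.IsHermitian) (v : Fin n → ℂ) :
    star v ⬝ᵥ B *ᵥ v =
      ((∑ i, hB.eigenvalues i *
        Complex.normSq ((star (hB.eigenvectorUnitary : Matrix (Fin n) (Fin n) ℂ) *ᵥ v) i) : ℝ) : ℂ) := by
  set U : Matrix (Fin n) (Fin n) ℂ := (hB.eigenvectorUnitary : Matrix (Fin n) (Fin n) ℂ) with hU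
  set w : Fin n → ℂ := star U *ᵥ v with hw
  have hsw : star w = star v ᵥ* U := by
    rw [hw, star_mulVec, star_eq_conjTranspose, conjTranspose_conjTranspose]
  conv_lhs => rw [hB.spectral_theorem, Unitary.conjStarAlgAut_apply, ← mulVec_mulVec, ← mulVec_mulVec, dotProduct_mulVec,
    ← hsw, ← hw]
  push_cast
  simp only [dotProduct, mulVec_diagonal, Pi.star_apply, Function.comp_apply]
  refine Finset.sum_congr rfl fun i _ => ?_
  have : (starRingEnd ℂ) (w i) * w i = ((Complex.normSq (w i) : ℝ) : ℂ) := by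
    rw [mul_comm, Complex.mul_conj]
  rw [RCLike.star_def, ← this, mul_left_comm]
  rfl

lemma dot_self_eq {n : ℕ} (v : Fin n → ℂ) :
    star v ⬝ᵥ v = ((∑ i, Complex.normSq (v i) : ℝ) : ℂ) := by
  push_cast
  simp only [dotProduct, Pi.star_apply, RCLike.star_def]
  refine Finset.sum_congr rfl fun i _ => ?_
  rw [mul_comm, Complex.mul_conj]

lemma norm_spectral {n : ℕ} {B : Matrix (Fin n) (Fin n) ℂ} (hB : B.IsHermitian) (v : Fin n → ℂ)
    (hv : star v ⬝ᵥ v = 1) :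
    (∑ i, Complex.normSq ((star (hB.eigenvectorUnitary : Matrix (Fin n) (Fin n) ℂ) *ᵥ v) i) : ℝ) = 1 := by
  set U : Matrix (Fin n) (Fin n) ℂ := (hB.eigenvectorUnitary : Matrix (Fin n) (Fin n) ℂ) with hU
  set w : Fin n → ℂ := star U *ᵥ v with hw
  have hsw : star w = star v ᵥ* U := by
    rw [hw, star_mulVec, star_eq_conjTranspose, conjTranspose_conjTranspose]
  have h1 : star w ⬝ᵥ w = 1 := by
    rw [hsw, hw, ← dotProduct_mulVec, mulVec_mulVec,
      (Matrix.mem_unitaryGroup_iff).mp hB.eigenvectorUnitary.2, one_mulVec, hv]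
  rw [dot_self_eq] at h1
  exact_mod_cast h1

lemma herm_quad_le {n k : ℕ} {B : Matrix (Fin n) (Fin n) ℂ}
    (hB : B.IsHermitian) (v : Fin n → ℂ) (hv : star v ⬝ᵥ v = 1)
    (hker : ∀ i, kthLargest hB.eigenvalues k < hB.eigenvalues i →
      (star (hB.eigenvectorUnitary : Matrix (Fin n) (Fin n) ℂ) *ᵥ v) i = 0) :
    star v ⬝ᵥ B *ᵥ v ≤ ((kthLargest hB.eigenvalues k : ℝ) : ℂ) := by
  rw [quad_spectral hB v]
  rw [Complex.real_le_real]
  set w : Fin n → ℂ := star (hB.eigenvectorUnitary : Matrix (Fin n) (Fin n) ℂ) *ᵥ v with hw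
  set c : ℝ := kthLargest hB.eigenvalues k with hc
  calc ∑ i, hB.eigenvalues i * Complex.normSq (w i)
      ≤ ∑ i, c * Complex.normSq (w i) := by
        refine Finset.sum_le_sum fun i _ => ?_
        by_cases h : c < hB.eigenvalues i
        · rw [hker i h]; simp
        · exact mul_le_mul_of_nonneg_right (not_lt.mp h) (Complex.normSq_nonneg _)
    _ = c := by rw [← Finset.mul_sum, norm_spectral hB v hv, mul_one]

lemma quad_decomp {n : ℕ} (A : Matrix (Fin n) (Fin n) ℂ) (t : ℝ) (v : Fin n → ℂ) :
    star v ⬝ᵥ (Complex.exp (Complex.I * t) • A + Complex.exp (-(Complex.I * t)) • Aᴴ) *ᵥ v =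
      Complex.exp (Complex.I * t) * (star v ⬝ᵥ A.mulVec v) +
        Complex.exp (-(Complex.I * t)) * (starRingEnd ℂ) (star v ⬝ᵥ A.mulVec v) := by
  have hconj : (starRingEnd ℂ) (star v ⬝ᵥ A.mulVec v) = star v ⬝ᵥ Aᴴ *ᵥ v := by
    have : (starRingEnd ℂ) (star v ⬝ᵥ A.mulVec v) = star (star v ⬝ᵥ A.mulVec v) := rfl
    rw [this, star_dotProduct, star_star, star_mulVec, dotProduct_mulVec]
  rw [hconj, add_mulVec, smul_mulVec, smul_mulVec, dotProduct_add,
    dotProduct_smul, dotProduct_smul, smul_eq_mul, smul_eq_mul]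

lemma exists_subspace {n : ℕ} (M : Matrix (Fin n) (Fin n) ℂ) (J : Finset (Fin n)) :
    ∃ S : Submodule ℂ (Fin n → ℂ), n - J.card ≤ Module.finrank ℂ S ∧
      ∀ v ∈ S, ∀ i ∈ J, (M *ᵥ v) i = 0 := by
  classical
  let L : (Fin n → ℂ) →ₗ[ℂ] (J → ℂ) :=
    (LinearMap.funLeft ℂ ℂ (fun j : J => (j : Fin n))).comp M.mulVecLin
  refine ⟨LinearMap.ker L, ?_, ?_⟩
  · have h1 := LinearMap.finrank_range_add_finrank_ker L
    have h2 : Module.finrank ℂ (LinearMap.range L) ≤ J.card := by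
      have hle := (LinearMap.range L).finrank_le
      have : Module.finrank ℂ ((↥J) → ℂ) = J.card := by
        rw [Module.finrank_fintype_fun_eq_card, Fintype.card_coe]
      omega
    have h3 : Module.finrank ℂ (Fin n → ℂ) = n := by
      rw [Module.finrank_fintype_fun_eq_card, Fintype.card_fin]
    omega
  · intro v hv i hi
    have h0 := LinearMap.mem_ker.mp hv
    have := congrFun h0 ⟨i, hi⟩
    simpa [L, LinearMap.funLeft] using this

theorem exists_unit_vector_three_halfplanes (n k : ℕ) (hn : 0 < n) (hk : 0 < k)
    (hk3 : (k : ℝ) < (n : ℝ) / 3 + 1) (A : Matrix (Fin n) (Fin n) ℂ)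
    (hHerm : ∀ t : ℝ,
      (Complex.exp (Complex.I * t) • A + Complex.exp (-(Complex.I * t)) • Aᴴ).IsHermitian)
    (t₁ t₂ t₃ : ℝ) (ht₁ : t₁ ∈ Set.Ico 0 (2 * Real.pi))
    (ht₂ : t₂ ∈ Set.Ico 0 (2 * Real.pi)) (ht₃ : t₃ ∈ Set.Ico 0 (2 * Real.pi)) :
    ∃ v : Fin n → ℂ, star v ⬝ᵥ v = 1 ∧
      ∀ t ∈ ({t₁, t₂, t₃} : Set ℝ),
        Complex.exp (Complex.I * t) * (star v ⬝ᵥ A.mulVec v) +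
          Complex.exp (-(Complex.I * t)) * (starRingEnd ℂ) (star v ⬝ᵥ A.mulVec v) ≤
        ((kthLargest ((hHerm t).eigenvalues) k : ℝ) : ℂ) := by
  classical
  have h3k : 3 * k ≤ n + 2 := by
    have h : (3 : ℝ) * k < (n : ℝ) + 3 := by linarith
    have : (3 * k : ℕ) < (n + 3 : ℕ) := by exact_mod_cast h
    omega
  have hkn : k ≤ n := by omega
  -- bad index sets
  set Jf : ℝ → Finset (Fin n) := fun t => Finset.univ.filter fun i =>
    kthLargest ((hHerm t).eigenvalues) k < (hHerm t).eigenvalues i with hJf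
  have hJcard : ∀ t, (Jf t).card ≤ k - 1 := fun t => card_gt_kthLargest hk hkn _
  -- subspaces
  obtain ⟨S₁, hd₁, hker₁⟩ := exists_subspace
    (star ((hHerm t₁).eigenvectorUnitary : Matrix (Fin n) (Fin n) ℂ)) (Jf t₁)
  obtain ⟨S₂, hd₂, hker₂⟩ := exists_subspace
    (star ((hHerm t₂).eigenvectorUnitary : Matrix (Fin n) (Fin n) ℂ)) (Jf t₂)
  obtain ⟨S₃, hd₃, hker₃⟩ := exists_subspace
    (star ((hHerm t₃).eigenvectorUnitary : Matrix (Fin n) (Fin n) ℂ)) (Jf t₃)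
  have hdim : ∀ p q : Submodule ℂ (Fin n → ℂ),
      Module.finrank ℂ p + Module.finrank ℂ q ≤ n + Module.finrank ℂ (p ⊓ q : Submodule ℂ (Fin n → ℂ)) := by
    intro p q
    have h1 := Submodule.finrank_sup_add_finrank_inf_eq p q
    have h2 : Module.finrank ℂ (p ⊔ q : Submodule ℂ (Fin n → ℂ)) ≤ n := by
      have := (p ⊔ q).finrank_le
      have h3 : Module.finrank ℂ (Fin n → ℂ) = n := by
        rw [Module.finrank_fintype_fun_eq_card, Fintype.card_fin]
      omega
    omega
  have h12 := hdim S₁ S₂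
  have h123 := hdim (S₁ ⊓ S₂) S₃
  have hc1 := hJcard t₁; have hc2 := hJcard t₂; have hc3 := hJcard t₃
  have hpos : 0 < Module.finrank ℂ (S₁ ⊓ S₂ ⊓ S₃ : Submodule ℂ (Fin n → ℂ)) := by omega
  have hne : (S₁ ⊓ S₂ ⊓ S₃ : Submodule ℂ (Fin n → ℂ)) ≠ ⊥ := by
    intro hbot
    rw [hbot, finrank_bot] at hpos
    exact lt_irrefl 0 hpos
  obtain ⟨v0, hv0S, hv0⟩ := Submodule.exists_mem_ne_zero_of_ne_bot hne
  -- normalize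
  set q : ℝ := ∑ i, Complex.normSq (v0 i) with hq
  have hqpos : 0 < q := by
    obtain ⟨i, hi⟩ := Function.ne_iff.mp hv0
    exact Finset.sum_pos' (fun j _ => Complex.normSq_nonneg _)
      ⟨i, Finset.mem_univ i, Complex.normSq_pos.mpr hi⟩
  set a : ℝ := Real.sqrt q with ha
  have hapos : 0 < a := Real.sqrt_pos.mpr hqpos
  set v : Fin n → ℂ := ((a : ℂ))⁻¹ • v0 with hv
  have hvS : v ∈ (S₁ ⊓ S₂ ⊓ S₃ : Submodule ℂ (Fin n → ℂ)) :=
    Submodule.smul_mem _ _ hv0S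
  have hv1 : star v ⬝ᵥ v = 1 := by
    rw [hv, star_smul, smul_dotProduct, dotProduct_smul, dot_self_eq, ← hq]
    rw [star_inv₀]
    have hconja : star ((a : ℂ)) = (a : ℂ) := by
      rw [RCLike.star_def, Complex.conj_ofReal]
    rw [hconja, smul_eq_mul, smul_eq_mul]
    have hreal : a⁻¹ * (a⁻¹ * q) = 1 := by
      have haq : a * a = q := Real.mul_self_sqrt hqpos.le
      rw [← haq]
      field_simp
    calc ((a:ℂ))⁻¹ * (((a:ℂ))⁻¹ * (q : ℂ)) = (((a⁻¹ * (a⁻¹ * q) : ℝ)) : ℂ) := by push_cast; ring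
      _ = 1 := by rw [hreal]; norm_num
  refine ⟨v, hv1, ?_⟩
  intro t ht
  have hS : v ∈ S₁ ∧ v ∈ S₂ ∧ v ∈ S₃ := by
    obtain ⟨⟨h1, h2⟩, h3⟩ := hvS
    exact ⟨h1, h2, h3⟩
  have hkert : ∀ i ∈ Jf t,
      (star ((hHerm t).eigenvectorUnitary : Matrix (Fin n) (Fin n) ℂ) *ᵥ v) i = 0 := by
    simp only [Set.mem_insert_iff, Set.mem_singleton_iff] at ht
    rcases ht with rfl | rfl | rfl
    · exact hker₁ v hS.1
    · exact hker₂ v hS.2.1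
    · exact hker₃ v hS.2.2
  rw [← quad_decomp A t v]
  exact herm_quad_le (hHerm t) v hv1 fun i hlt =>
    hkert i (by simp only [hJf, Finset.mem_filter, Finset.mem_univ, true_and]; exact hlt)
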